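/- arXiv:1811.08715 — 2 statements merged into one kernel-verified Lean document; each statement's English description precedes it below -/
import Mathlib

section
/- Under the assumptions ν_min ≤ ν̂(s) ≤ ν₀ and ν_min ≤ (ν̂(s)s)' ≤ ν₀, the map T(W) = ν̂(|W|)W on ℝ² is strongly monotone: (T(φ+ψ) − T(φ)) · ψ ≥ ν_min |ψ|² for all φ, ψ ∈ ℝ². -/
open scoped RealInnerProductSpace

/-- strong monotonicity `(T(φ+ψ) − T(φ)) · ψ ≥ νmin|ψ|²`
for `T(W) = ν̂(|W|)W`. -/
theorem T_strongly_monotone (ν : ℝ → ℝ) (νmin ν₀ : ℝ)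
    (hC1 : ContDiffOn ℝ 1 ν (Set.Ici 0))
    (hmin : 0 < νmin)
    (hbd : ∀ s ≥ (0:ℝ), νmin ≤ ν s ∧ ν s ≤ ν₀)
    (hbd' : ∀ s ≥ (0:ℝ), νmin ≤ deriv (fun t => ν t * t) s ∧
      deriv (fun t => ν t * t) s ≤ ν₀) :
    ∀ φ ψ : EuclideanSpace ℝ (Fin 2),
      νmin * ‖ψ‖ ^ 2 ≤ ⟪(ν ‖φ + ψ‖) • (φ + ψ) - (ν ‖φ‖) • φ, ψ⟫ := by
  set N : ℝ → ℝ := fun t => ν t * t with hN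
  -- g := N - νmin • id is monotone on [0,∞)
  have hgmono : MonotoneOn (fun t => N t - νmin * t) (Set.Ici 0) := by
    have hcont : ContinuousOn (fun t => N t - νmin * t) (Set.Ici 0) := by
      exact (hC1.continuousOn.mul continuousOn_id).sub
        ((continuous_const.mul continuous_id).continuousOn)
    have hint : interior (Set.Ici (0:ℝ)) = Set.Ioi 0 := interior_Ici
    have hdiffN : ∀ x ∈ Set.Ioi (0:ℝ), DifferentiableAt ℝ N x := by
      intro x hx
      have : DifferentiableAt ℝ ν x :=
        (hC1.differentiableOn one_ne_zero).differentiableAt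
          (Ici_mem_nhds (by exact hx))
      exact this.mul differentiableAt_id
    have hdiff : DifferentiableOn ℝ (fun t => N t - νmin * t)
        (interior (Set.Ici 0)) := by
      rw [hint]
      intro x hx
      exact ((hdiffN x hx).sub ((differentiableAt_const _).mul
        differentiableAt_id)).differentiableWithinAt
    apply monotoneOn_of_deriv_nonneg (convex_Ici 0) hcont hdiff
    intro x hx
    rw [hint] at hx
    have h2 : HasDerivAt (fun t : ℝ => νmin * t) νmin x := by
      simpa using (hasDerivAt_id x).const_mul νmin
    rw [deriv_fun_sub (hdiffN x hx) h2.differentiableAt, h2.deriv, sub_nonneg]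
    exact (hbd' x (le_of_lt hx)).1
  have hkey : ∀ s t : ℝ, 0 ≤ s → 0 ≤ t →
      νmin * (s - t) ^ 2 ≤ (N s - N t) * (s - t) := by
    intro s t hs ht
    rcases le_total t s with h | h
    · have := hgmono ht hs h
      simp only at this
      nlinarith [this]
    · have := hgmono hs ht h
      simp only at this
      nlinarith [this]
  intro φ ψ
  set a : EuclideanSpace ℝ (Fin 2) := φ + ψ with ha
  set b : EuclideanSpace ℝ (Fin 2) := φ with hb
  have hψ : ψ = a - b := by simp [ha, hb]
  have hna : (0:ℝ) ≤ ‖a‖ := norm_nonneg _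
  have hnb : (0:ℝ) ≤ ‖b‖ := norm_nonneg _
  have hcs : ⟪a, b⟫ ≤ ‖a‖ * ‖b‖ := real_inner_le_norm a b
  have hνa : νmin ≤ ν ‖a‖ := (hbd _ hna).1
  have hνb : νmin ≤ ν ‖b‖ := (hbd _ hnb).1
  have hk := hkey ‖a‖ ‖b‖ hna hnb
  have hexp : ⟪(ν ‖a‖) • a - (ν ‖b‖) • b, a - b⟫ =
      ν ‖a‖ * ‖a‖ ^ 2 - (ν ‖a‖ + ν ‖b‖) * ⟪a, b⟫ + ν ‖b‖ * ‖b‖ ^ 2 := by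
    rw [inner_sub_left, inner_sub_right, inner_sub_right,
      real_inner_smul_left, real_inner_smul_left, real_inner_smul_left,
      real_inner_smul_left, real_inner_self_eq_norm_sq,
      real_inner_self_eq_norm_sq, real_inner_comm b a]
    ring
  have hnrm : ‖a - b‖ ^ 2 = ‖a‖ ^ 2 - 2 * ⟪a, b⟫ + ‖b‖ ^ 2 :=
    norm_sub_sq_real a b
  rw [hψ, hexp, hnrm]
  simp only [hN] at hk
  nlinarith [hk, hcs, hνa, hνb]
end

section
/- Under the same setup, if |ν̂'''(s)|s + 9|ν̂''(s)| + 12|ν̂'(s)|/s ≤ c₈ for all s > 0, then |S_{φ₂}(ψ) − S_{φ₁}(ψ)| ≤ c₈ |φ₂ − φ₁| |ψ|² for all φ₁, φ₂, ψ ∈ ℝ². -/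
set_option maxRecDepth 8000

noncomputable section

/-- `T(W) = ν̂(|W|)W` on `ℝ²`. -/
def Tmap (ν : ℝ → ℝ) (W : EuclideanSpace ℝ (Fin 2)) : EuclideanSpace ℝ (Fin 2) :=
  ν ‖W‖ • W

/-- `S_φ(ψ) = T(φ+ψ) − T(φ) − DT(φ)ψ`. -/
def Smap (ν : ℝ → ℝ) (φ ψ : EuclideanSpace ℝ (Fin 2)) : EuclideanSpace ℝ (Fin 2) :=
  Tmap ν (φ + ψ) - Tmap ν φ - fderiv ℝ (Tmap ν) φ ψ

open Real ContinuousLinearMap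

variable {E : Type*} [NormedAddCommGroup E] [InnerProductSpace ℝ E]

local notation "⟪" x ", " y "⟫" => @inner ℝ _ _ x y

/-- quadratic error implies HasFDerivAt -/
theorem hasFDerivAt_of_sq {F : Type*} [NormedAddCommGroup F] [NormedSpace ℝ F]
    {G : Type*} [NormedAddCommGroup G] [NormedSpace ℝ G]
    {f : F → G} {l : F →L[ℝ] G} {x : F} {C : ℝ} (hC : 0 ≤ C)
    (h : ∀ y, ‖y - x‖ ≤ 1 → ‖f y - f x - l (y - x)‖ ≤ C * ‖y - x‖ ^ 2) :
    HasFDerivAt f l x := by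
  rw [hasFDerivAt_iff_isLittleO_nhds_zero]
  rw [Asymptotics.isLittleO_iff]
  intro c hc
  have hmem : Metric.ball (0:F) (min 1 (c / (C + 1))) ∈ nhds (0:F) := by
    apply Metric.ball_mem_nhds
    exact lt_min one_pos (div_pos hc (by linarith))
  filter_upwards [hmem] with y hy
  simp only [Metric.mem_ball, dist_zero_right] at hy
  have h1 : ‖y‖ ≤ 1 := le_of_lt (lt_of_lt_of_le hy (min_le_left _ _))
  have h2 : ‖y‖ ≤ c / (C + 1) := le_of_lt (lt_of_lt_of_le hy (min_le_right _ _))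
  have := h (x + y) (by simpa using h1)
  simp only [add_sub_cancel_left] at this
  calc ‖f (x + y) - f x - l y‖ ≤ C * ‖y‖ ^ 2 := this
    _ = C * ‖y‖ * ‖y‖ := by ring
    _ ≤ (C + 1) * (c / (C + 1)) * ‖y‖ := by
        apply mul_le_mul_of_nonneg_right _ (norm_nonneg _)
        calc C * ‖y‖ ≤ (C+1) * ‖y‖ := by nlinarith [norm_nonneg y]
          _ ≤ (C+1) * (c / (C+1)) := by
              apply mul_le_mul_of_nonneg_left h2 (by linarith)
    _ = c * ‖y‖ := by field_simp

theorem hasFDerivAt_norm' {x : E} (hx : x ≠ 0) :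
    HasFDerivAt (fun y : E => ‖y‖) (‖x‖⁻¹ • innerSL ℝ x) x := by
  have hq : HasFDerivAt (fun y : E => ⟪y, y⟫)
      ((fderivInnerCLM ℝ (x, x)).comp ((ContinuousLinearMap.id ℝ E).prod
        (ContinuousLinearMap.id ℝ E))) x :=
    (hasFDerivAt_id x).inner ℝ (hasFDerivAt_id x)
  have hqx : ⟪x, x⟫ ≠ 0 := by
    rw [real_inner_self_eq_norm_sq]
    have : ‖x‖ ≠ 0 := norm_ne_zero_iff.mpr hx
    positivity
  have hs := (Real.hasDerivAt_sqrt hqx).comp_hasFDerivAt (f := fun y : E => ⟪y, y⟫) x hq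
  have heq : (fun y : E => Real.sqrt ⟪y, y⟫) = fun y : E => ‖y‖ := by
    funext y
    rw [real_inner_self_eq_norm_sq, Real.sqrt_sq (norm_nonneg y)]
  simp only [Function.comp_def] at hs
  rw [heq] at hs
  refine hs.congr_fderiv ?_
  symm
  ext y
  simp only [coe_smul', Pi.smul_apply, innerSL_apply_apply, smul_eq_mul, coe_comp',
    Function.comp_apply, fderivInnerCLM_apply, prod_apply, coe_id', id_eq]
  rw [real_inner_self_eq_norm_sq, Real.sqrt_sq (norm_nonneg x), real_inner_comm y x]
  have : ‖x‖ ≠ 0 := norm_ne_zero_iff.mpr hx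
  field_simp
  ring

/-- first derivative of `T` -/
def Lmap (ν : ℝ → ℝ) (x : E) : E →L[ℝ] E :=
  (deriv ν ‖x‖ * ‖x‖⁻¹) • (innerSL ℝ x).smulRight x + ν ‖x‖ • ContinuousLinearMap.id ℝ E

theorem Lmap_apply (ν : ℝ → ℝ) (x h : E) :
    Lmap ν x h = (deriv ν ‖x‖ * ‖x‖⁻¹ * ⟪x, h⟫) • x + ν ‖x‖ • h := by
  simp only [Lmap, ContinuousLinearMap.add_apply, ContinuousLinearMap.coe_smul',
    Pi.smul_apply, ContinuousLinearMap.smulRight_apply, innerSL_apply_apply,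
    ContinuousLinearMap.coe_id', id_eq, smul_smul, smul_eq_mul]

section nu
variable {ν : ℝ → ℝ} {ctil : ℝ}

theorem ctil_nonneg (hb : ∀ s > (0:ℝ), |deriv ν s| / s ≤ ctil) : 0 ≤ ctil :=
  le_trans (by positivity) (hb 1 one_pos)

theorem nu1_le (hC3 : ContDiff ℝ 1 ν) (hb : ∀ s > (0:ℝ), |deriv ν s| / s ≤ ctil) :
    ∀ s : ℝ, 0 ≤ s → |deriv ν s| ≤ ctil * s := by
  have hcont : Continuous (deriv ν) := (contDiff_one_iff_deriv.mp hC3).2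
  intro s hs
  rcases eq_or_lt_of_le hs with h | h
  · have h0 : |deriv ν 0| ≤ ctil * 0 := by
      have h1 : Filter.Tendsto (fun t => |deriv ν t|) (nhdsWithin 0 (Set.Ioi 0))
          (nhds |deriv ν 0|) :=
        ((hcont.abs.tendsto 0).mono_left nhdsWithin_le_nhds)
      have h2 : Filter.Tendsto (fun t : ℝ => ctil * t) (nhdsWithin 0 (Set.Ioi 0))
          (nhds (ctil * 0)) :=
        ((continuous_const.mul continuous_id).tendsto 0).mono_left nhdsWithin_le_nhds
      refine le_of_tendsto_of_tendsto h1 h2 ?_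
      filter_upwards [self_mem_nhdsWithin] with t ht
      have := hb t ht
      rw [div_le_iff₀ (by exact ht)] at this
      linarith [this]
    rw [← h]; simpa using h0
  · have := hb s h
    rw [div_le_iff₀ h] at this
    linarith [this]

theorem nu_sub_le (hC3 : ContDiff ℝ 1 ν) (hb : ∀ s > (0:ℝ), |deriv ν s| / s ≤ ctil) :
    ∀ s : ℝ, 0 ≤ s → |ν s - ν 0| ≤ ctil * s ^ 2 := by
  intro s hs
  have hdiff : Differentiable ℝ ν := hC3.differentiable one_ne_zero
  have := norm_image_sub_le_of_norm_deriv_le_segment' (f := ν) (a := 0) (b := s)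
    (f' := deriv ν) (C := ctil * s)
    (fun t ht => (hdiff t).hasDerivAt.hasDerivWithinAt)
    (fun t ht => by
      have h1 := nu1_le hC3 hb t ht.1
      have : ctil * t ≤ ctil * s := by
        apply mul_le_mul_of_nonneg_left (le_of_lt ht.2) (ctil_nonneg hb)
      simpa using le_trans h1 this)
    s (Set.right_mem_Icc.mpr hs)
  simpa using le_trans this (by nlinarith)

theorem hasFDerivAt_T (hC3 : ContDiff ℝ 1 ν) (hb : ∀ s > (0:ℝ), |deriv ν s| / s ≤ ctil)
    (x : E) : HasFDerivAt (fun y : E => ν ‖y‖ • y) (Lmap ν x) x := by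
  rcases eq_or_ne x 0 with rfl | hx
  · apply hasFDerivAt_of_sq (C := ctil) (ctil_nonneg hb)
    intro y hy
    simp only [sub_zero] at hy ⊢
    have hL0 : Lmap ν 0 y = ν ‖(0:E)‖ • y := by
      simp [Lmap]
    rw [hL0]
    have : ν ‖y‖ • y - ν ‖(0:E)‖ • (0:E) - ν ‖(0:E)‖ • y = (ν ‖y‖ - ν 0) • y := by
      simp [sub_smul]
    rw [this, norm_smul]
    have h1 : |ν ‖y‖ - ν 0| ≤ ctil * ‖y‖ ^ 2 := nu_sub_le hC3 hb _ (norm_nonneg y)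
    calc |ν ‖y‖ - ν 0| * ‖y‖ ≤ ctil * ‖y‖ ^ 2 * ‖y‖ := by
          apply mul_le_mul_of_nonneg_right h1 (norm_nonneg y)
      _ ≤ ctil * ‖y‖ ^ 2 * 1 := by
          have hct := ctil_nonneg hb
          apply mul_le_mul_of_nonneg_left hy (by positivity)
      _ = ctil * ‖y‖ ^ 2 := by ring
  · have hν : HasDerivAt ν (deriv ν ‖x‖) ‖x‖ :=
      ((hC3.differentiable one_ne_zero) ‖x‖).hasDerivAt
    have hcomp := hν.comp_hasFDerivAt x (hasFDerivAt_norm' hx)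
    have hmain := hcomp.smul (hasFDerivAt_id x)
    refine hmain.congr_fderiv ?_
    symm
    ext h
    rw [Lmap_apply]
    simp only [ContinuousLinearMap.add_apply, ContinuousLinearMap.smulRight_apply,
      ContinuousLinearMap.coe_smul', Pi.smul_apply, innerSL_apply_apply, smul_eq_mul,
      ContinuousLinearMap.coe_id', id_eq]
    rw [add_comm]
    congr 1
    rw [mul_assoc]
end nu

theorem hasDerivAt_of_sq {G : Type*} [NormedAddCommGroup G] [NormedSpace ℝ G]
    {f : ℝ → G} {v : G} {x C : ℝ} (hC : 0 ≤ C)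
    (h : ∀ y, ‖f y - f x - (y - x) • v‖ ≤ C * |y - x| ^ 2) :
    HasDerivAt f v x := by
  rw [hasDerivAt_iff_isLittleO]
  rw [Asymptotics.isLittleO_iff]
  intro c hc
  have hmem : Metric.ball x (c / (C + 1)) ∈ nhds x :=
    Metric.ball_mem_nhds _ (div_pos hc (by linarith))
  filter_upwards [hmem] with y hy
  rw [Metric.mem_ball, Real.dist_eq] at hy
  calc ‖f y - f x - (y - x) • v‖ ≤ C * |y - x| ^ 2 := h y
    _ = C * |y - x| * |y - x| := by ring
    _ ≤ (C + 1) * (c / (C + 1)) * |y - x| := by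
        apply mul_le_mul_of_nonneg_right _ (abs_nonneg _)
        calc C * |y - x| ≤ (C + 1) * |y - x| := by nlinarith [abs_nonneg (y - x)]
          _ ≤ (C + 1) * (c / (C + 1)) := mul_le_mul_of_nonneg_left (le_of_lt hy) (by linarith)
    _ = c * |y - x| := by field_simp
    _ = c * ‖y - x‖ := by rw [Real.norm_eq_abs]

/-- scalar coefficients of second derivative -/
def cf1 (ν : ℝ → ℝ) (x : E) : ℝ := deriv ν ‖x‖ * ‖x‖⁻¹

def cf3 (ν : ℝ → ℝ) (x : E) : ℝ :=
  deriv (deriv ν) ‖x‖ * (‖x‖⁻¹) ^ 2 - deriv ν ‖x‖ * (‖x‖⁻¹) ^ 3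

/-- the second derivative of `T` at `x`, applied to vectors `a`, `b` -/
def Rmap (ν : ℝ → ℝ) (x a b : E) : E :=
  (cf3 ν x * ⟪x, a⟫ * ⟪x, b⟫) • x +
    cf1 ν x • (⟪a, b⟫ • x + ⟪x, b⟫ • a + ⟪x, a⟫ • b)

theorem Rmap_zero (ν : ℝ → ℝ) (a b : E) : Rmap ν 0 a b = 0 := by
  simp [Rmap]

theorem Rmap_symm (ν : ℝ → ℝ) (x a b : E) : Rmap ν x a b = Rmap ν x b a := by
  unfold Rmap
  rw [real_inner_comm a b]
  module

section deriv2
variable {ν : ℝ → ℝ} {ctil : ℝ}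

theorem hasDerivAt_L (hC3 : ContDiff ℝ 2 ν) (hb : ∀ s > (0:ℝ), |deriv ν s| / s ≤ ctil)
    (p₀ δ w : E) (t : ℝ) :
    HasDerivAt (fun s => Lmap ν (p₀ + s • δ) w) (Rmap ν (p₀ + t • δ) δ w) t := by
  have hC1 : ContDiff ℝ 1 ν := hC3.of_le (by norm_num)
  have hdν : Differentiable ℝ ν := hC1.differentiable one_ne_zero
  have hdν1 : Differentiable ℝ (deriv ν) := by
    have h2 : ContDiff ℝ ((1:ℕ)+1) ν := by exact_mod_cast hC3
    exact (contDiff_succ_iff_deriv.mp h2).2.2.differentiable (by norm_num)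
  have hpath : ∀ s : ℝ, HasDerivAt (fun u : ℝ => p₀ + u • δ) δ s := by
    intro s
    simpa using ((hasDerivAt_id s).smul_const δ).const_add p₀
  set p : ℝ → E := fun s => p₀ + s • δ with hp
  rcases eq_or_ne (p t) 0 with h0 | hne
  · -- point is zero: derivative is 0
    have hR0 : Rmap ν (p₀ + t • δ) δ w = 0 := by
      show Rmap ν (p t) δ w = 0
      rw [h0, Rmap_zero]
    rw [hR0]
    have hct : 0 ≤ ctil := ctil_nonneg hb
    apply hasDerivAt_of_sq (C := 2 * ctil * ‖w‖ * ‖δ‖ ^ 2) (by positivity)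
    intro y
    have hpy : p y = (y - t) • δ := by
      have : p y = p t + (y - t) • δ := by
        simp only [hp, sub_smul]
        abel
      rw [this, h0, zero_add]
    have hρ : ‖p y‖ = |y - t| * ‖δ‖ := by rw [hpy, norm_smul, Real.norm_eq_abs]
    have hL0 : Lmap ν (p t) w = ν 0 • w := by
      rw [h0, Lmap_apply]
      simp
    show ‖Lmap ν (p y) w - Lmap ν (p t) w - (y - t) • 0‖ ≤ _
    rw [hL0, Lmap_apply, smul_zero, sub_zero]
    have key : (deriv ν ‖p y‖ * ‖p y‖⁻¹ * ⟪p y, w⟫) • p y + ν ‖p y‖ • w - ν 0 • w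
        = (deriv ν ‖p y‖ * ‖p y‖⁻¹ * ⟪p y, w⟫) • p y + (ν ‖p y‖ - ν 0) • w := by
      rw [sub_smul]; abel
    rw [key]
    have h1 : ‖(deriv ν ‖p y‖ * ‖p y‖⁻¹ * ⟪p y, w⟫) • p y‖ ≤ ctil * ‖p y‖ ^ 2 * ‖w‖ := by
      rcases eq_or_ne (p y) 0 with hz | hz
      · rw [hz]; simp; try positivity
      · have hr : (0:ℝ) < ‖p y‖ := norm_pos_iff.mpr hz
        rw [norm_smul]
        have hi : |⟪p y, w⟫| ≤ ‖p y‖ * ‖w‖ := abs_real_inner_le_norm _ _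
        have hd : |deriv ν ‖p y‖| ≤ ctil * ‖p y‖ := nu1_le hC1 hb _ (le_of_lt hr)
        have : |deriv ν ‖p y‖ * ‖p y‖⁻¹ * ⟪p y, w⟫| ≤ ctil * ‖p y‖ * ‖w‖ := by
          rw [abs_mul, abs_mul, abs_inv, abs_norm]
          calc |deriv ν ‖p y‖| * ‖p y‖⁻¹ * |⟪p y, w⟫|
              ≤ (ctil * ‖p y‖) * ‖p y‖⁻¹ * (‖p y‖ * ‖w‖) := by
                apply mul_le_mul (mul_le_mul_of_nonneg_right hd (by positivity)) hi
                  (abs_nonneg _) (by positivity)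
            _ = ctil * ‖p y‖ * ‖w‖ := by field_simp
        calc |deriv ν ‖p y‖ * ‖p y‖⁻¹ * ⟪p y, w⟫| * ‖p y‖
            ≤ (ctil * ‖p y‖ * ‖w‖) * ‖p y‖ := mul_le_mul_of_nonneg_right this (norm_nonneg _)
          _ = ctil * ‖p y‖ ^ 2 * ‖w‖ := by ring
    have h2 : ‖(ν ‖p y‖ - ν 0) • w‖ ≤ ctil * ‖p y‖ ^ 2 * ‖w‖ := by
      rw [norm_smul, Real.norm_eq_abs]
      exact mul_le_mul_of_nonneg_right (nu_sub_le hC1 hb _ (norm_nonneg _)) (norm_nonneg _)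
    calc ‖(deriv ν ‖p y‖ * ‖p y‖⁻¹ * ⟪p y, w⟫) • p y + (ν ‖p y‖ - ν 0) • w‖
        ≤ ctil * ‖p y‖ ^ 2 * ‖w‖ + ctil * ‖p y‖ ^ 2 * ‖w‖ :=
          le_trans (norm_add_le _ _) (add_le_add h1 h2)
      _ = 2 * ctil * ‖w‖ * ‖p y‖ ^ 2 := by ring
      _ = 2 * ctil * ‖w‖ * ‖δ‖ ^ 2 * |y - t| ^ 2 := by rw [hρ]; ring
  · -- nonzero point: chain rule
    have hr : (0:ℝ) < ‖p t‖ := norm_pos_iff.mpr hne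
    have hρ : HasDerivAt (fun s => ‖p s‖) (‖p t‖⁻¹ * ⟪p t, δ⟫) t := by
      have := (hasFDerivAt_norm' hne).comp_hasDerivAt t (hpath t)
      simp at this; exact this
    have hν1 : HasDerivAt (fun s => deriv ν ‖p s‖)
        (deriv (deriv ν) ‖p t‖ * (‖p t‖⁻¹ * ⟪p t, δ⟫)) t :=
      by have := ((hdν1 ‖p t‖).hasDerivAt).comp t hρ; exact this
    have hνρ : HasDerivAt (fun s => ν ‖p s‖) (deriv ν ‖p t‖ * (‖p t‖⁻¹ * ⟪p t, δ⟫)) t :=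
      by have := ((hdν ‖p t‖).hasDerivAt).comp t hρ; exact this
    have hinv : HasDerivAt (fun s => ‖p s‖⁻¹)
        (-(‖p t‖⁻¹ * ⟪p t, δ⟫) / ‖p t‖ ^ 2) t := hρ.inv (ne_of_gt hr)
    have hι : HasDerivAt (fun s => ⟪p s, w⟫) ⟪δ, w⟫ t := by
      have := (hpath t).inner ℝ (hasDerivAt_const t w)
      simpa using this
    have hmain := (((hν1.mul hinv).mul hι).smul (hpath t)).add (hνρ.smul_const w)
    have heq : (fun s => Lmap ν (p₀ + s • δ) w)
        = fun s => (deriv ν ‖p s‖ * ‖p s‖⁻¹ * ⟪p s, w⟫) • p s + ν ‖p s‖ • w := by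
      funext s
      rw [Lmap_apply]
    rw [heq]
    refine hmain.congr_deriv ?_
    symm
    unfold Rmap cf1 cf3
    have hrne : ‖p t‖ ≠ 0 := ne_of_gt hr
    rw [show p₀ + t • δ = p t from rfl]
    simp only [Pi.mul_apply]
    match_scalars <;> (field_simp; try ring)
end deriv2

theorem abs_mul_le {x1 x2 b1 b2 : ℝ} (h1 : |x1| ≤ b1) (h2 : |x2| ≤ b2) :
    |x1 * x2| ≤ b1 * b2 := by
  rw [abs_mul]
  exact mul_le_mul h1 h2 (abs_nonneg _) (le_trans (abs_nonneg _) h1)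

/-- coefficient of the radial part of the third derivative -/
def cg3 (ν : ℝ → ℝ) (x : E) : ℝ :=
  deriv (deriv (deriv ν)) ‖x‖ * (‖x‖⁻¹) ^ 3 - 3 * deriv (deriv ν) ‖x‖ * (‖x‖⁻¹) ^ 4
    + 3 * deriv ν ‖x‖ * (‖x‖⁻¹) ^ 5

/-- the derivative of `x ↦ Rmap ν x a b` at `q` in direction `d` -/
def Dmap (ν : ℝ → ℝ) (q d a b : E) : E :=
  (cg3 ν q * ⟪q, d⟫ * ⟪q, a⟫ * ⟪q, b⟫) • q
  + cf3 ν q • ((⟪d, a⟫ * ⟪q, b⟫ + ⟪q, a⟫ * ⟪d, b⟫) • q + (⟪q, a⟫ * ⟪q, b⟫) • d)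
  + (cf3 ν q * ⟪q, d⟫) • (⟪a, b⟫ • q + ⟪q, b⟫ • a + ⟪q, a⟫ • b)
  + cf1 ν q • (⟪a, b⟫ • d + ⟪d, b⟫ • a + ⟪d, a⟫ • b)

section deriv3
variable {ν : ℝ → ℝ} {c₈ : ℝ}

set_option maxHeartbeats 2000000 in
theorem hasDerivAt_R (hC3 : ContDiff ℝ 3 ν) (q₀ d a b : E) (s : ℝ)
    (hne : q₀ + s • d ≠ 0) :
    HasDerivAt (fun u => Rmap ν (q₀ + u • d) a b) (Dmap ν (q₀ + s • d) d a b) s := by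
  have hdν : Differentiable ℝ ν := hC3.differentiable (by norm_num)
  have h3 : ContDiff ℝ ((2:ℕ)+1) ν := by exact_mod_cast hC3
  have hd2 : ContDiff ℝ ((1:ℕ)+1) (deriv ν) := by
    exact_mod_cast (contDiff_succ_iff_deriv.mp h3).2.2
  have hdν1 : Differentiable ℝ (deriv ν) := hd2.differentiable (by norm_num)
  have hdν2 : Differentiable ℝ (deriv (deriv ν)) :=
    (contDiff_succ_iff_deriv.mp hd2).2.2.differentiable (by norm_num)
  set q : ℝ → E := fun u => q₀ + u • d with hq
  have hpath : ∀ u : ℝ, HasDerivAt q d u := by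
    intro u
    rw [hq]
    simpa using ((hasDerivAt_id u).smul_const d).const_add q₀
  have hr : (0:ℝ) < ‖q s‖ := norm_pos_iff.mpr hne
  have hρ : HasDerivAt (fun u => ‖q u‖) (‖q s‖⁻¹ * ⟪q s, d⟫) s := by
    have := (hasFDerivAt_norm' hne).comp_hasDerivAt s (hpath s)
    simpa only [Function.comp_def, ContinuousLinearMap.coe_smul', Pi.smul_apply,
      innerSL_apply_apply, smul_eq_mul] using this
  have hinv : HasDerivAt (fun u => ‖q u‖⁻¹)
      (-(‖q s‖⁻¹ * ⟪q s, d⟫) / ‖q s‖ ^ 2) s := hρ.inv (ne_of_gt hr)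
  have hinv2 : HasDerivAt (fun u => (‖q u‖⁻¹) ^ 2)
      (2 * (‖q s‖⁻¹) ^ 1 * (-(‖q s‖⁻¹ * ⟪q s, d⟫) / ‖q s‖ ^ 2)) s := by
    exact (hinv.pow 2).congr_deriv (by simp)
  have hinv3 : HasDerivAt (fun u => (‖q u‖⁻¹) ^ 3)
      (3 * (‖q s‖⁻¹) ^ 2 * (-(‖q s‖⁻¹ * ⟪q s, d⟫) / ‖q s‖ ^ 2)) s := by
    exact (hinv.pow 3).congr_deriv (by simp)
  have hν1ρ : HasDerivAt (fun u => deriv ν ‖q u‖)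
      (deriv (deriv ν) ‖q s‖ * (‖q s‖⁻¹ * ⟪q s, d⟫)) s :=
    by have := ((hdν1 ‖q s‖).hasDerivAt).comp s hρ; exact this
  have hν2ρ : HasDerivAt (fun u => deriv (deriv ν) ‖q u‖)
      (deriv (deriv (deriv ν)) ‖q s‖ * (‖q s‖⁻¹ * ⟪q s, d⟫)) s :=
    by have := ((hdν2 ‖q s‖).hasDerivAt).comp s hρ; exact this
  have hia : HasDerivAt (fun u => ⟪q u, a⟫) ⟪d, a⟫ s := by
    simpa using (hpath s).inner ℝ (hasDerivAt_const s a)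
  have hib : HasDerivAt (fun u => ⟪q u, b⟫) ⟪d, b⟫ s := by
    simpa using (hpath s).inner ℝ (hasDerivAt_const s b)
  have hcf3 := (hν2ρ.mul hinv2).sub (hν1ρ.mul hinv3)
  have hF3 := (hcf3.mul hia).mul hib
  have hterm1 := hF3.smul (hpath s)
  have hcf1 := hν1ρ.mul hinv
  have hV := ((hpath s).const_smul (c := ⟪a, b⟫)).add
    ((hib.smul_const a).add (hia.smul_const b))
  have hterm2 := hcf1.smul (by convert hV using 2; simp only [Pi.add_apply, Pi.smul_apply]; abel : HasDerivAt
    (fun u => ⟪a, b⟫ • q u + ⟪q u, b⟫ • a + ⟪q u, a⟫ • b)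
    (⟪a, b⟫ • d + (⟪d, b⟫ • a + ⟪d, a⟫ • b)) s)
  have hmain := hterm1.add hterm2
  have heq : (fun u => Rmap ν (q₀ + u • d) a b)
      = fun u => ((deriv (deriv ν) ‖q u‖ * (‖q u‖⁻¹) ^ 2
          - deriv ν ‖q u‖ * (‖q u‖⁻¹) ^ 3) * ⟪q u, a⟫ * ⟪q u, b⟫) • q u
        + (deriv ν ‖q u‖ * ‖q u‖⁻¹) • (⟪a, b⟫ • q u + ⟪q u, b⟫ • a + ⟪q u, a⟫ • b) := by
    funext u
    rfl
  rw [heq]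
  refine hmain.congr_deriv ?_
  symm
  unfold Dmap cg3 cf3 cf1
  have hrne : ‖q s‖ ≠ 0 := ne_of_gt hr
  rw [show q₀ + s • d = q s from rfl]
  simp only [Pi.mul_apply, Pi.sub_apply]
  match_scalars <;> (field_simp; try ring)

theorem cg3_abs_le {x : E} (hx : x ≠ 0) :
    |cg3 ν x| ≤ |deriv (deriv (deriv ν)) ‖x‖| * (‖x‖⁻¹) ^ 3
      + 3 * |deriv (deriv ν) ‖x‖| * (‖x‖⁻¹) ^ 4 + 3 * |deriv ν ‖x‖| * (‖x‖⁻¹) ^ 5 := by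
  have hr : (0:ℝ) < ‖x‖ := norm_pos_iff.mpr hx
  unfold cg3
  calc |deriv (deriv (deriv ν)) ‖x‖ * (‖x‖⁻¹) ^ 3 - 3 * deriv (deriv ν) ‖x‖ * (‖x‖⁻¹) ^ 4
        + 3 * deriv ν ‖x‖ * (‖x‖⁻¹) ^ 5|
      ≤ |deriv (deriv (deriv ν)) ‖x‖ * (‖x‖⁻¹) ^ 3 - 3 * deriv (deriv ν) ‖x‖ * (‖x‖⁻¹) ^ 4|
        + |3 * deriv ν ‖x‖ * (‖x‖⁻¹) ^ 5| := abs_add_le _ _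
    _ ≤ |deriv (deriv (deriv ν)) ‖x‖ * (‖x‖⁻¹) ^ 3| + |3 * deriv (deriv ν) ‖x‖ * (‖x‖⁻¹) ^ 4|
        + |3 * deriv ν ‖x‖ * (‖x‖⁻¹) ^ 5| := by
          have := abs_sub (deriv (deriv (deriv ν)) ‖x‖ * (‖x‖⁻¹) ^ 3)
            (3 * deriv (deriv ν) ‖x‖ * (‖x‖⁻¹) ^ 4)
          linarith
    _ = _ := by
        simp only [abs_mul, abs_pow, abs_inv, abs_norm,
          abs_of_pos (show (0:ℝ) < 3 by norm_num)]

theorem cf3_abs_le {x : E} (hx : x ≠ 0) :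
    |cf3 ν x| ≤ |deriv (deriv ν) ‖x‖| * (‖x‖⁻¹) ^ 2 + |deriv ν ‖x‖| * (‖x‖⁻¹) ^ 3 := by
  have hr : (0:ℝ) < ‖x‖ := norm_pos_iff.mpr hx
  unfold cf3
  calc |deriv (deriv ν) ‖x‖ * (‖x‖⁻¹) ^ 2 - deriv ν ‖x‖ * (‖x‖⁻¹) ^ 3|
      ≤ |deriv (deriv ν) ‖x‖ * (‖x‖⁻¹) ^ 2| + |deriv ν ‖x‖ * (‖x‖⁻¹) ^ 3| := abs_sub _ _
    _ = _ := by
        simp only [abs_mul, abs_pow, abs_inv, abs_norm]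

theorem cf1_abs_eq (x : E) : |cf1 ν x| = |deriv ν ‖x‖| * ‖x‖⁻¹ := by
  unfold cf1
  rw [abs_mul, abs_inv, abs_norm]

theorem Dmap_norm_le
    (h8 : ∀ s > (0:ℝ),
      |deriv (deriv (deriv ν)) s| * s + 9 * |deriv (deriv ν) s| + 12 * |deriv ν s| / s ≤ c₈)
    {q : E} (hq : q ≠ 0) (d a b : E) :
    ‖Dmap ν q d a b‖ ≤ c₈ * ‖d‖ * ‖a‖ * ‖b‖ := by
  have hr : (0:ℝ) < ‖q‖ := norm_pos_iff.mpr hq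
  set r := ‖q‖ with hrdef
  have hrne : r ≠ 0 := ne_of_gt hr
  set A := |deriv ν r| with hA
  set B := |deriv (deriv ν) r| with hB
  set C3 := |deriv (deriv (deriv ν)) r| with hC
  have hA0 : 0 ≤ A := abs_nonneg _
  have hB0 : 0 ≤ B := abs_nonneg _
  have hC0 : 0 ≤ C3 := abs_nonneg _
  have h8r := h8 r hr
  set na := ‖a‖ with hna'; set nb := ‖b‖ with hnb'; set nd := ‖d‖ with hnd'
  have hna : 0 ≤ na := norm_nonneg _
  have hnb : 0 ≤ nb := norm_nonneg _
  have hnd : 0 ≤ nd := norm_nonneg _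
  have ia : |⟪q, a⟫| ≤ r * na := abs_real_inner_le_norm q a
  have ib : |⟪q, b⟫| ≤ r * nb := abs_real_inner_le_norm q b
  have id' : |⟪q, d⟫| ≤ r * nd := abs_real_inner_le_norm q d
  have ida : |⟪d, a⟫| ≤ nd * na := abs_real_inner_le_norm d a
  have idb : |⟪d, b⟫| ≤ nd * nb := abs_real_inner_le_norm d b
  have iab : |⟪a, b⟫| ≤ na * nb := abs_real_inner_le_norm a b
  have hg3 : |cg3 ν q| ≤ C3 * (r⁻¹) ^ 3 + 3 * B * (r⁻¹) ^ 4 + 3 * A * (r⁻¹) ^ 5 :=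
    cg3_abs_le hq
  have hf3 : |cf3 ν q| ≤ B * (r⁻¹) ^ 2 + A * (r⁻¹) ^ 3 := cf3_abs_le hq
  have hf1 : |cf1 ν q| = A * r⁻¹ := cf1_abs_eq q
  have t1 : ‖(cg3 ν q * ⟪q, d⟫ * ⟪q, a⟫ * ⟪q, b⟫) • q‖
      ≤ ((C3 * (r⁻¹) ^ 3 + 3 * B * (r⁻¹) ^ 4 + 3 * A * (r⁻¹) ^ 5) * (r * nd) * (r * na)
        * (r * nb)) * r := by
    rw [norm_smul, Real.norm_eq_abs]
    apply mul_le_mul _ le_rfl (norm_nonneg _) (by positivity)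
    exact abs_mul_le (abs_mul_le (abs_mul_le hg3 id') ia) ib
  have t2 : ‖cf3 ν q • ((⟪d, a⟫ * ⟪q, b⟫ + ⟪q, a⟫ * ⟪d, b⟫) • q + (⟪q, a⟫ * ⟪q, b⟫) • d)‖
      ≤ (B * (r⁻¹) ^ 2 + A * (r⁻¹) ^ 3) * (3 * r ^ 2 * nd * na * nb) := by
    rw [norm_smul, Real.norm_eq_abs]
    apply mul_le_mul hf3 _ (norm_nonneg _) (by positivity)
    calc ‖(⟪d, a⟫ * ⟪q, b⟫ + ⟪q, a⟫ * ⟪d, b⟫) • q + (⟪q, a⟫ * ⟪q, b⟫) • d‖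
        ≤ ‖(⟪d, a⟫ * ⟪q, b⟫ + ⟪q, a⟫ * ⟪d, b⟫) • q‖ + ‖(⟪q, a⟫ * ⟪q, b⟫) • d‖ :=
          norm_add_le _ _
      _ ≤ (nd * na * (r * nb) + r * na * (nd * nb)) * r + r * na * (r * nb) * nd := by
          rw [norm_smul, norm_smul, Real.norm_eq_abs, Real.norm_eq_abs]
          apply add_le_add
          · apply mul_le_mul _ le_rfl (norm_nonneg _) (by positivity)
            calc |⟪d, a⟫ * ⟪q, b⟫ + ⟪q, a⟫ * ⟪d, b⟫|
                ≤ |⟪d, a⟫ * ⟪q, b⟫| + |⟪q, a⟫ * ⟪d, b⟫| := abs_add_le _ _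
              _ ≤ nd * na * (r * nb) + r * na * (nd * nb) :=
                  add_le_add (abs_mul_le ida ib) (abs_mul_le ia idb)
          · exact mul_le_mul (abs_mul_le ia ib) le_rfl (norm_nonneg _) (by positivity)
      _ = 3 * r ^ 2 * nd * na * nb := by ring
  have hVb : ‖⟪a, b⟫ • q + ⟪q, b⟫ • a + ⟪q, a⟫ • b‖ ≤ 3 * r * na * nb := by
    calc ‖⟪a, b⟫ • q + ⟪q, b⟫ • a + ⟪q, a⟫ • b‖
        ≤ ‖⟪a, b⟫ • q‖ + ‖⟪q, b⟫ • a‖ + ‖⟪q, a⟫ • b‖ := norm_add₃_le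
      _ ≤ na * nb * r + r * nb * na + r * na * nb := by
          rw [norm_smul, norm_smul, norm_smul, Real.norm_eq_abs, Real.norm_eq_abs,
            Real.norm_eq_abs]
          refine add_le_add (add_le_add ?_ ?_) ?_
          · exact mul_le_mul iab le_rfl (norm_nonneg _) (by positivity)
          · exact mul_le_mul ib le_rfl (norm_nonneg _) (by positivity)
          · exact mul_le_mul ia le_rfl (norm_nonneg _) (by positivity)
      _ = 3 * r * na * nb := by ring
  have t3 : ‖(cf3 ν q * ⟪q, d⟫) • (⟪a, b⟫ • q + ⟪q, b⟫ • a + ⟪q, a⟫ • b)‖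
      ≤ ((B * (r⁻¹) ^ 2 + A * (r⁻¹) ^ 3) * (r * nd)) * (3 * r * na * nb) := by
    rw [norm_smul, Real.norm_eq_abs]
    exact mul_le_mul (abs_mul_le hf3 id') hVb (norm_nonneg _) (by positivity)
  have t4 : ‖cf1 ν q • (⟪a, b⟫ • d + ⟪d, b⟫ • a + ⟪d, a⟫ • b)‖
      ≤ (A * r⁻¹) * (3 * nd * na * nb) := by
    rw [norm_smul, Real.norm_eq_abs, hf1]
    apply mul_le_mul le_rfl _ (norm_nonneg _) (by positivity)
    calc ‖⟪a, b⟫ • d + ⟪d, b⟫ • a + ⟪d, a⟫ • b‖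
        ≤ ‖⟪a, b⟫ • d‖ + ‖⟪d, b⟫ • a‖ + ‖⟪d, a⟫ • b‖ := norm_add₃_le
      _ ≤ na * nb * nd + nd * nb * na + nd * na * nb := by
          rw [norm_smul, norm_smul, norm_smul, Real.norm_eq_abs, Real.norm_eq_abs,
            Real.norm_eq_abs]
          refine add_le_add (add_le_add ?_ ?_) ?_
          · exact mul_le_mul iab le_rfl (norm_nonneg _) (by positivity)
          · exact mul_le_mul idb le_rfl (norm_nonneg _) (by positivity)
          · exact mul_le_mul ida le_rfl (norm_nonneg _) (by positivity)
      _ = 3 * nd * na * nb := by ring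
  have hsum : ‖Dmap ν q d a b‖
      ≤ ((C3 * (r⁻¹) ^ 3 + 3 * B * (r⁻¹) ^ 4 + 3 * A * (r⁻¹) ^ 5) * (r * nd) * (r * na)
        * (r * nb)) * r
        + (B * (r⁻¹) ^ 2 + A * (r⁻¹) ^ 3) * (3 * r ^ 2 * nd * na * nb)
        + ((B * (r⁻¹) ^ 2 + A * (r⁻¹) ^ 3) * (r * nd)) * (3 * r * na * nb)
        + (A * r⁻¹) * (3 * nd * na * nb) := by
    unfold Dmap
    refine le_trans (norm_add_le _ _) ?_
    refine add_le_add (le_trans (norm_add_le _ _) ?_) t4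
    refine add_le_add (le_trans (norm_add_le _ _) ?_) t3
    exact add_le_add t1 t2
  have hkey : ((C3 * (r⁻¹) ^ 3 + 3 * B * (r⁻¹) ^ 4 + 3 * A * (r⁻¹) ^ 5) * (r * nd) * (r * na)
        * (r * nb)) * r
        + (B * (r⁻¹) ^ 2 + A * (r⁻¹) ^ 3) * (3 * r ^ 2 * nd * na * nb)
        + ((B * (r⁻¹) ^ 2 + A * (r⁻¹) ^ 3) * (r * nd)) * (3 * r * na * nb)
        + (A * r⁻¹) * (3 * nd * na * nb)
      = (C3 * r + 9 * B + 12 * A / r) * (nd * na * nb) := by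
    field_simp
    ring
  refine (hsum.trans (le_of_eq hkey)).trans ?_
  calc (C3 * r + 9 * B + 12 * A / r) * (nd * na * nb)
      ≤ c₈ * (nd * na * nb) := mul_le_mul_of_nonneg_right h8r (by positivity)
    _ = c₈ * nd * na * nb := by ring

theorem Rmap_norm_le (hc8 : 0 ≤ c₈)
    (h8 : ∀ s > (0:ℝ),
      |deriv (deriv (deriv ν)) s| * s + 9 * |deriv (deriv ν) s| + 12 * |deriv ν s| / s ≤ c₈)
    (x a b : E) : ‖Rmap ν x a b‖ ≤ c₈ * ‖x‖ * ‖a‖ * ‖b‖ := by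
  rcases eq_or_ne x 0 with rfl | hx
  · rw [Rmap_zero]
    simp
  · have hr : (0:ℝ) < ‖x‖ := norm_pos_iff.mpr hx
    set r := ‖x‖ with hrdef
    have hrne : r ≠ 0 := ne_of_gt hr
    have h8r := h8 r hr
    set A := |deriv ν r| with hA
    set B := |deriv (deriv ν) r| with hB
    have hA0 : 0 ≤ A := abs_nonneg _
    have hB0 : 0 ≤ B := abs_nonneg _
    have hB9 : B ≤ c₈ / 9 := by
      have h1 : 0 ≤ |deriv (deriv (deriv ν)) r| * r := by positivity
      have h2 : 0 ≤ 12 * A / r := by positivity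
      linarith
    have hA12 : A ≤ c₈ / 12 * r := by
      have h1 : 0 ≤ |deriv (deriv (deriv ν)) r| * r := by positivity
      have h2 : 9 * B ≥ 0 := by positivity
      have h3 : 12 * A / r ≤ c₈ := by linarith
      rw [div_le_iff₀ hr] at h3
      linarith
    set na := ‖a‖; set nb := ‖b‖
    have hna : 0 ≤ na := norm_nonneg _
    have hnb : 0 ≤ nb := norm_nonneg _
    have ia : |⟪x, a⟫| ≤ r * na := abs_real_inner_le_norm x a
    have ib : |⟪x, b⟫| ≤ r * nb := abs_real_inner_le_norm x b
    have iab : |⟪a, b⟫| ≤ na * nb := abs_real_inner_le_norm a b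
    have hf3 : |cf3 ν x| ≤ B * (r⁻¹) ^ 2 + A * (r⁻¹) ^ 3 := cf3_abs_le hx
    have hf1 : |cf1 ν x| = A * r⁻¹ := cf1_abs_eq x
    have hVb : ‖⟪a, b⟫ • x + ⟪x, b⟫ • a + ⟪x, a⟫ • b‖ ≤ 3 * r * na * nb := by
      calc ‖⟪a, b⟫ • x + ⟪x, b⟫ • a + ⟪x, a⟫ • b‖
          ≤ ‖⟪a, b⟫ • x‖ + ‖⟪x, b⟫ • a‖ + ‖⟪x, a⟫ • b‖ := norm_add₃_le
        _ ≤ na * nb * r + r * nb * na + r * na * nb := by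
            rw [norm_smul, norm_smul, norm_smul, Real.norm_eq_abs, Real.norm_eq_abs,
              Real.norm_eq_abs]
            refine add_le_add (add_le_add ?_ ?_) ?_
            · exact mul_le_mul iab le_rfl (norm_nonneg _) (by positivity)
            · exact mul_le_mul ib le_rfl (norm_nonneg _) (by positivity)
            · exact mul_le_mul ia le_rfl (norm_nonneg _) (by positivity)
        _ = 3 * r * na * nb := by ring
    have hsum : ‖Rmap ν x a b‖
        ≤ ((B * (r⁻¹) ^ 2 + A * (r⁻¹) ^ 3) * (r * na) * (r * nb)) * r
          + (A * r⁻¹) * (3 * r * na * nb) := by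
      unfold Rmap
      refine le_trans (norm_add_le _ _) (add_le_add ?_ ?_)
      · rw [norm_smul, Real.norm_eq_abs]
        apply mul_le_mul _ le_rfl (norm_nonneg _) (by positivity)
        exact abs_mul_le (abs_mul_le hf3 ia) ib
      · rw [norm_smul, Real.norm_eq_abs, hf1]
        exact mul_le_mul le_rfl hVb (norm_nonneg _) (by positivity)
    have hkey : ((B * (r⁻¹) ^ 2 + A * (r⁻¹) ^ 3) * (r * na) * (r * nb)) * r
          + (A * r⁻¹) * (3 * r * na * nb) = (B * r + 4 * A) * (na * nb) := by
      field_simp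
      ring
    rw [hkey] at hsum
    refine hsum.trans ?_
    have : B * r + 4 * A ≤ c₈ * r := by
      have := hA12
      have := hB9
      nlinarith
    calc (B * r + 4 * A) * (na * nb) ≤ (c₈ * r) * (na * nb) :=
          mul_le_mul_of_nonneg_right this (by positivity)
      _ = c₈ * r * na * nb := by ring

theorem Rmap_lip (hc8 : 0 ≤ c₈) (hC3 : ContDiff ℝ 3 ν)
    (h8 : ∀ s > (0:ℝ),
      |deriv (deriv (deriv ν)) s| * s + 9 * |deriv (deriv ν) s| + 12 * |deriv ν s| / s ≤ c₈)
    (y z a b : E) : ‖Rmap ν y a b - Rmap ν z a b‖ ≤ c₈ * ‖y - z‖ * ‖a‖ * ‖b‖ := by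
  by_cases hseg : ∀ s ∈ Set.Icc (0:ℝ) 1, z + s • (y - z) ≠ 0
  · have hder : ∀ s ∈ Set.Icc (0:ℝ) 1,
        HasDerivWithinAt (fun u => Rmap ν (z + u • (y - z)) a b)
          (Dmap ν (z + s • (y - z)) (y - z) a b) (Set.Icc (0:ℝ) 1) s := by
      intro s hs
      exact (hasDerivAt_R hC3 z (y - z) a b s (hseg s hs)).hasDerivWithinAt
    have hbound : ∀ s ∈ Set.Ico (0:ℝ) 1,
        ‖Dmap ν (z + s • (y - z)) (y - z) a b‖ ≤ c₈ * ‖y - z‖ * ‖a‖ * ‖b‖ := by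
      intro s hs
      exact Dmap_norm_le h8 (hseg s ⟨hs.1, le_of_lt hs.2⟩) (y - z) a b
    have := norm_image_sub_le_of_norm_deriv_le_segment_01' hder hbound
    simpa using this
  · push_neg at hseg
    obtain ⟨s, hs, hzero⟩ := hseg
    have hsz : s • (y - z) = -z := eq_neg_of_add_eq_zero_right hzero
    have hy : (1 - s) • (y - z) = y := by
      rw [sub_smul, one_smul, hsz]
      abel
    have hnz : s * ‖y - z‖ = ‖z‖ := by
      rw [← abs_of_nonneg hs.1, ← Real.norm_eq_abs, ← norm_smul, hsz, norm_neg]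
    have hny : (1 - s) * ‖y - z‖ = ‖y‖ := by
      rw [← abs_of_nonneg (by linarith [hs.2] : (0:ℝ) ≤ 1 - s), ← Real.norm_eq_abs,
        ← norm_smul, hy]
    calc ‖Rmap ν y a b - Rmap ν z a b‖
        ≤ ‖Rmap ν y a b‖ + ‖Rmap ν z a b‖ := norm_sub_le _ _
      _ ≤ c₈ * ‖y‖ * ‖a‖ * ‖b‖ + c₈ * ‖z‖ * ‖a‖ * ‖b‖ :=
          add_le_add (Rmap_norm_le hc8 h8 y a b) (Rmap_norm_le hc8 h8 z a b)
      _ = c₈ * ‖y - z‖ * ‖a‖ * ‖b‖ := by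
          rw [← hny, ← hnz]
          ring
end deriv3


/-- `|S_{φ₂}(ψ) − S_{φ₁}(ψ)| ≤ c₈|φ₂ − φ₁||ψ|²`. -/
theorem S_diff_first_arg (ν : ℝ → ℝ) (ctil c₈ : ℝ)
    (hC3 : ContDiff ℝ 3 ν)
    (hb : ∀ s > (0:ℝ), |deriv ν s| / s ≤ ctil)
    (hc8 : 0 ≤ c₈)
    (h8 : ∀ s > (0:ℝ),
      |deriv (deriv (deriv ν)) s| * s + 9 * |deriv (deriv ν) s| + 12 * |deriv ν s| / s ≤ c₈) :
    ∀ φ₁ φ₂ ψ : EuclideanSpace ℝ (Fin 2),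
      ‖Smap ν φ₂ ψ - Smap ν φ₁ ψ‖ ≤ c₈ * ‖φ₂ - φ₁‖ * ‖ψ‖ ^ 2 := by
  intro φ₁ φ₂ ψ
  have hC1 : ContDiff ℝ 1 ν := hC3.of_le (by norm_num)
  have hC2 : ContDiff ℝ 2 ν := hC3.of_le (by norm_num)
  have hT : ∀ x : EuclideanSpace ℝ (Fin 2), HasFDerivAt (Tmap ν) (Lmap ν x) x :=
    fun x => hasFDerivAt_T hC1 hb x
  have hfd : ∀ φ : EuclideanSpace ℝ (Fin 2), fderiv ℝ (Tmap ν) φ = Lmap ν φ :=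
    fun φ => (hT φ).fderiv
  set δ := φ₂ - φ₁ with hδ
  set g : ℝ → EuclideanSpace ℝ (Fin 2) := fun t =>
    Tmap ν (φ₁ + t • δ + ψ) - Tmap ν (φ₁ + t • δ) - Lmap ν (φ₁ + t • δ) ψ with hgdef
  set G : ℝ → EuclideanSpace ℝ (Fin 2) := fun t =>
    Lmap ν (φ₁ + t • δ + ψ) δ - Lmap ν (φ₁ + t • δ) δ - Rmap ν (φ₁ + t • δ) δ ψ with hGdef
  have hg : ∀ t : ℝ, HasDerivAt g (G t) t := by
    intro t
    have hp1 : HasDerivAt (fun t : ℝ => φ₁ + t • δ + ψ) δ t := by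
      simpa using ((((hasDerivAt_id t).smul_const δ).const_add φ₁).add_const ψ)
    have hp2 : HasDerivAt (fun t : ℝ => φ₁ + t • δ) δ t := by
      simpa using (((hasDerivAt_id t).smul_const δ).const_add φ₁)
    have h1 : HasDerivAt (fun t : ℝ => Tmap ν (φ₁ + t • δ + ψ))
        (Lmap ν (φ₁ + t • δ + ψ) δ) t :=
      by have := (hT (φ₁ + t • δ + ψ)).comp_hasDerivAt t hp1; exact this
    have h2 : HasDerivAt (fun t : ℝ => Tmap ν (φ₁ + t • δ))
        (Lmap ν (φ₁ + t • δ) δ) t :=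
      by have := (hT (φ₁ + t • δ)).comp_hasDerivAt t hp2; exact this
    have h3 : HasDerivAt (fun s : ℝ => Lmap ν (φ₁ + s • δ) ψ)
        (Rmap ν (φ₁ + t • δ) δ ψ) t := hasDerivAt_L hC2 hb φ₁ δ ψ t
    exact (h1.sub h2).sub h3
  have hGb : ∀ t : ℝ, ‖G t‖ ≤ c₈ * ‖δ‖ * ‖ψ‖ ^ 2 := by
    intro t
    set x := φ₁ + t • δ with hx
    set k : ℝ → EuclideanSpace ℝ (Fin 2) := fun s =>
      Lmap ν (x + s • ψ) δ - s • Rmap ν x δ ψ with hkdef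
    have hk : ∀ s : ℝ, HasDerivAt k
        (Rmap ν (x + s • ψ) ψ δ - Rmap ν x δ ψ) s := by
      intro s
      have h1 : HasDerivAt (fun s : ℝ => Lmap ν (x + s • ψ) δ)
          (Rmap ν (x + s • ψ) ψ δ) s := hasDerivAt_L hC2 hb x ψ δ s
      have h2 : HasDerivAt (fun s : ℝ => s • Rmap ν x δ ψ) (Rmap ν x δ ψ) s := by
        simpa using (hasDerivAt_id s).smul_const (Rmap ν x δ ψ)
      exact h1.sub h2
    have hbound : ∀ s ∈ Set.Ico (0:ℝ) 1,
        ‖Rmap ν (x + s • ψ) ψ δ - Rmap ν x δ ψ‖ ≤ c₈ * ‖δ‖ * ‖ψ‖ ^ 2 := by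
      intro s hs
      rw [Rmap_symm ν (x + s • ψ) ψ δ]
      have hlip := Rmap_lip hc8 hC3 h8 (x + s • ψ) x δ ψ
      have hdiff : x + s • ψ - x = s • ψ := by abel
      rw [hdiff] at hlip
      refine hlip.trans ?_
      rw [norm_smul, Real.norm_eq_abs, abs_of_nonneg hs.1]
      have h1 : s * ‖ψ‖ ≤ ‖ψ‖ := by
        nlinarith [norm_nonneg ψ, hs.1, hs.2]
      calc c₈ * (s * ‖ψ‖) * ‖δ‖ * ‖ψ‖ ≤ c₈ * ‖ψ‖ * ‖δ‖ * ‖ψ‖ := by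
            gcongr
        _ = c₈ * ‖δ‖ * ‖ψ‖ ^ 2 := by ring
    have hk01 := norm_image_sub_le_of_norm_deriv_le_segment_01'
      (f := k) (f' := fun s => Rmap ν (x + s • ψ) ψ δ - Rmap ν x δ ψ)
      (fun s _ => (hk s).hasDerivWithinAt) hbound
    have hkval : k 1 - k 0 = G t := by
      simp only [hkdef, hGdef, one_smul, zero_smul, add_zero]
      abel
    rw [hkval] at hk01
    exact hk01
  have hg01 := norm_image_sub_le_of_norm_deriv_le_segment_01'
    (f := g) (f' := G) (fun t _ => (hg t).hasDerivWithinAt) (fun t _ => hGb t)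
  have hx1 : φ₁ + (1:ℝ) • δ = φ₂ := by
    rw [one_smul, hδ]
    abel
  have hgval : g 1 - g 0 = Smap ν φ₂ ψ - Smap ν φ₁ ψ := by
    simp only [hgdef, Smap, hfd, one_smul, zero_smul, add_zero]
    rw [show φ₁ + δ = φ₂ from by rw [hδ]; abel]
  rw [hgval] at hg01
  exact hg01

end
end
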